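/- Let E be a real inner product space, f : E → ℝ convex and differentiable with L-Lipschitz gradient for some L > 0, and r : E → ℝ convex; set F = f + r. Let x_prev, x ∈ E, ω ≥ 0, and x̂ = x + ω(x − x_prev). If x⁺ minimizes over E the function z ↦ ⟨∇f(x̂), z − x̂⟩ + (L/2)‖z − x̂‖² + r(z) (prox-linear subproblem with stepsize α = 1/L), then F(x) − F(x⁺) ≥ (L/2)‖x⁺ − x‖² − (L ω²/2)‖x − x_prev‖². -/

import Mathlib

open RealInnerProductSpace Topology Filter

section Aux

variable {E : Type*} [NormedAddCommGroup E] [InnerProductSpace ℝ E] [CompleteSpace E]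

/-- Derivative of `f` along a line. -/
lemma line_hasDerivAt (f : E → ℝ) (g : E → E) (hdiff : ∀ x, HasGradientAt f (g x) x)
    (u d : E) (t : ℝ) :
    HasDerivAt (fun s : ℝ => f (u + s • d)) ⟪g (u + t • d), d⟫ t := by
  have hc : HasDerivAt (fun s : ℝ => u + s • d) d t := by
    simpa using ((hasDerivAt_id t).smul_const d).const_add u
  have := ((hdiff (u + t • d)).hasFDerivAt).comp_hasDerivAt t hc
  simpa [InnerProductSpace.toDual_apply_apply, Function.comp_def] using this

/-- Descent lemma: quadratic upper bound from an `L`-Lipschitz gradient. -/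
lemma descent_lemma (f : E → ℝ) (g : E → E) (L : ℝ) (hL : 0 < L)
    (hdiff : ∀ x, HasGradientAt f (g x) x)
    (hlip : ∀ u v : E, ‖g u - g v‖ ≤ L * ‖u - v‖) (u v : E) :
    f v ≤ f u + ⟪g u, v - u⟫ + L / 2 * ‖v - u‖ ^ 2 := by
  set d := v - u with hd
  have hgcont : Continuous g := by
    have : LipschitzWith (Real.toNNReal L) g := by
      apply LipschitzWith.of_dist_le_mul
      intro a b
      rw [dist_eq_norm, dist_eq_norm]
      calc ‖g a - g b‖ ≤ L * ‖a - b‖ := hlip a b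
        _ = (Real.toNNReal L : ℝ) * ‖a - b‖ := by rw [Real.coe_toNNReal L hL.le]
    exact this.continuous
  have hDcont : Continuous fun t : ℝ => ⟪g (u + t • d), d⟫ := by
    apply Continuous.inner
    · exact hgcont.comp (continuous_const.add (continuous_id.smul continuous_const))
    · exact continuous_const
  have hfund : f (u + (1:ℝ) • d) - f (u + (0:ℝ) • d)
      = ∫ t in (0:ℝ)..1, ⟪g (u + t • d), d⟫ := by
    rw [intervalIntegral.integral_eq_sub_of_hasDerivAt
      (fun t _ => line_hasDerivAt f g hdiff u d t) (hDcont.intervalIntegrable 0 1)]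
  have hbound : ∀ t ∈ Set.Icc (0:ℝ) 1,
      ⟪g (u + t • d), d⟫ ≤ ⟪g u, d⟫ + L * t * ‖d‖ ^ 2 := by
    intro t ht
    have h1 : ⟪g (u + t • d), d⟫ - ⟪g u, d⟫ = ⟪g (u + t • d) - g u, d⟫ := by
      rw [inner_sub_left]
    have h2 : ⟪g (u + t • d) - g u, d⟫ ≤ ‖g (u + t • d) - g u‖ * ‖d‖ :=
      real_inner_le_norm _ _
    have h3 : ‖g (u + t • d) - g u‖ ≤ L * (t * ‖d‖) := by
      have := hlip (u + t • d) u
      have he : u + t • d - u = t • d := by abel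
      rw [he, norm_smul, Real.norm_eq_abs, abs_of_nonneg ht.1] at this
      linarith [this]
    have h4 : ‖g (u + t • d) - g u‖ * ‖d‖ ≤ L * (t * ‖d‖) * ‖d‖ :=
      mul_le_mul_of_nonneg_right h3 (norm_nonneg d)
    nlinarith [norm_nonneg d]
  have hint : (∫ t in (0:ℝ)..1, ⟪g (u + t • d), d⟫)
      ≤ ∫ t in (0:ℝ)..1, (⟪g u, d⟫ + L * t * ‖d‖ ^ 2) := by
    apply intervalIntegral.integral_mono_on zero_le_one
      (hDcont.intervalIntegrable 0 1)
      (((continuous_const.add ((continuous_const.mul continuous_id).mul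
        continuous_const))).intervalIntegrable 0 1)
    intro t ht
    exact hbound t ht
  have hval : (∫ t in (0:ℝ)..1, (⟪g u, d⟫ + L * t * ‖d‖ ^ 2)) =
      ⟪g u, d⟫ + L / 2 * ‖d‖ ^ 2 := by
    have h1 : (∫ t in (0:ℝ)..1, (⟪g u, d⟫ + L * t * ‖d‖ ^ 2))
        = (∫ t in (0:ℝ)..1, ⟪g u, d⟫) + ∫ t in (0:ℝ)..1, L * t * ‖d‖ ^ 2 := by
      apply intervalIntegral.integral_add
      · exact intervalIntegrable_const
      · exact ((continuous_const.mul continuous_id).mul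
          continuous_const).intervalIntegrable 0 1
    rw [h1]
    have h2 : (∫ t in (0:ℝ)..1, L * t * ‖d‖ ^ 2)
        = (L * ‖d‖ ^ 2) * ∫ t in (0:ℝ)..1, t := by
      rw [← intervalIntegral.integral_const_mul]
      congr 1
      ext t
      ring
    rw [h2]
    simp [integral_id]
    ring
  have h01 : u + (1:ℝ) • d = v := by simp [hd]
  have h00 : u + (0:ℝ) • d = u := by simp
  rw [h01, h00] at hfund
  have := hfund ▸ (hval ▸ hint)
  linarith [this, hfund, hval]

/-- Gradient inequality for a convex function. -/
lemma convex_gradient_ineq (f : E → ℝ) (g : E → E)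
    (hfconv : ConvexOn ℝ Set.univ f) (hdiff : ∀ x, HasGradientAt f (g x) x)
    (u w : E) : f u + ⟪g u, w - u⟫ ≤ f w := by
  set d := w - u with hd
  set φ : ℝ → ℝ := fun s => f (u + s • d) with hφ
  have hderiv : HasDerivAt φ ⟪g u, d⟫ 0 := by
    have := line_hasDerivAt f g hdiff u d 0
    simpa using this
  have hslope : Filter.Tendsto (slope φ 0) (𝓝[>] (0:ℝ)) (𝓝 ⟪g u, d⟫) :=
    (hasDerivAt_iff_tendsto_slope.mp hderiv).mono_left
      (nhdsWithin_mono 0 (fun t ht => ne_of_gt ht))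
  have hev : ∀ᶠ t in 𝓝[>] (0:ℝ), slope φ 0 t ≤ f w - f u := by
    filter_upwards [Ioc_mem_nhdsGT_of_mem (Set.mem_Ico.mpr ⟨le_refl 0, zero_lt_one⟩)]
      with t ht
    have ht0 : 0 < t := ht.1
    have ht1 : t ≤ 1 := ht.2
    have hcomb : u + t • d = (1 - t) • u + t • w := by
      rw [hd, smul_sub, sub_smul]; module
    have hcv := hfconv.2 (Set.mem_univ u) (Set.mem_univ w)
      (by linarith : (0:ℝ) ≤ 1 - t) ht0.le (by ring)
    have hφt : φ t ≤ (1 - t) * f u + t * f w := by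
      rw [hφ]; simp only; rw [hcomb]; simpa using hcv
    have hφ0 : φ 0 = f u := by simp [hφ]
    have hs : slope φ 0 t = (φ t - φ 0) / t := by
      rw [slope_def_field, sub_zero]
    rw [hs, div_le_iff₀ ht0, hφ0]
    nlinarith [hφt]
  have := le_of_tendsto hslope hev
  linarith

end Aux

/-- Remark 2.2 (convex case, stepsize `1/L`): objective decrease of one
prox-linear step with extrapolation when `f` and `r` are convex. -/
theorem prox_linear_descent_convex
    {E : Type*} [NormedAddCommGroup E] [InnerProductSpace ℝ E] [CompleteSpace E]
    (f : E → ℝ) (g : E → E) (r : E → ℝ) (L : ℝ) (hL : 0 < L)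
    (hfconv : ConvexOn ℝ Set.univ f) (hrconv : ConvexOn ℝ Set.univ r)
    (hdiff : ∀ x, HasGradientAt f (g x) x)
    (hlip : ∀ u v : E, ‖g u - g v‖ ≤ L * ‖u - v‖)
    (x_prev x : E) (ω : ℝ) (hω : 0 ≤ ω)
    (xhat : E) (hxhat : xhat = x + ω • (x - x_prev))
    (xplus : E)
    (hmin : ∀ z : E,
      ⟪g xhat, xplus - xhat⟫ + L / 2 * ‖xplus - xhat‖ ^ 2 + r xplus ≤
        ⟪g xhat, z - xhat⟫ + L / 2 * ‖z - xhat‖ ^ 2 + r z) :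
    (f x + r x) - (f xplus + r xplus) ≥
      L / 2 * ‖xplus - x‖ ^ 2 - L * ω ^ 2 / 2 * ‖x - x_prev‖ ^ 2 := by
  set a := xplus - xhat with ha
  set b := x - xplus with hb
  set C : ℝ := ⟪g xhat, b⟫ + L * ⟪a, b⟫ + r x - r xplus with hC
  -- Step 1: first-order optimality style inequality `0 ≤ C`
  have hCpos : 0 ≤ C := by
    have key : ∀ t : ℝ, t ∈ Set.Ioc (0:ℝ) 1 → 0 ≤ C + L / 2 * t * ‖b‖ ^ 2 := by
      intro t ht
      have ht0 : 0 < t := ht.1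
      have ht1 : t ≤ 1 := ht.2
      have hmv := hmin (xplus + t • b)
      have hz : xplus + t • b - xhat = a + t • b := by rw [ha]; abel
      have hinner : ⟪g xhat, a + t • b⟫ = ⟪g xhat, a⟫ + t * ⟪g xhat, b⟫ := by
        rw [inner_add_right, real_inner_smul_right]
      have hnorm : ‖a + t • b‖ ^ 2 = ‖a‖ ^ 2 + 2 * (t * ⟪a, b⟫) + t ^ 2 * ‖b‖ ^ 2 := by
        rw [norm_add_sq_real, real_inner_smul_right, norm_smul, Real.norm_eq_abs,
          abs_of_nonneg ht0.le, mul_pow]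
        try ring
      have hrconvt : r (xplus + t • b) ≤ (1 - t) * r xplus + t * r x := by
        have hcomb : xplus + t • b = (1 - t) • xplus + t • x := by
          rw [hb, smul_sub, sub_smul]; module
        have := hrconv.2 (Set.mem_univ xplus) (Set.mem_univ x)
          (by linarith : (0:ℝ) ≤ 1 - t) ht0.le (by ring)
        rw [hcomb]; simpa using this
      rw [hz, hinner, hnorm] at hmv
      have h0t : 0 ≤ t * C + L / 2 * t ^ 2 * ‖b‖ ^ 2 := by
        rw [hC]; nlinarith [hmv, hrconvt]
      have h0t' : t * 0 ≤ t * (C + L / 2 * t * ‖b‖ ^ 2) := by nlinarith [h0t]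
      exact le_of_mul_le_mul_left h0t' ht0
    have htend : Filter.Tendsto (fun t : ℝ => C + L / 2 * t * ‖b‖ ^ 2)
        (𝓝[>] (0:ℝ)) (𝓝 C) := by
      have hc : Continuous fun t : ℝ => C + L / 2 * t * ‖b‖ ^ 2 := by continuity
      have := (hc.tendsto 0).mono_left (nhdsWithin_le_nhds (s := Set.Ioi (0:ℝ)))
      simpa using this
    refine ge_of_tendsto htend ?_
    filter_upwards [Ioc_mem_nhdsGT_of_mem (Set.mem_Ico.mpr ⟨le_refl 0, zero_lt_one⟩)]
      with t ht using key t ht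
  -- Step 2: convexity of f at xhat
  have hconv1 : f xhat + ⟪g xhat, x - xhat⟫ ≤ f x :=
    convex_gradient_ineq f g hfconv hdiff xhat x
  -- Step 3: descent lemma at xplus
  have hdesc : f xplus ≤ f xhat + ⟪g xhat, xplus - xhat⟫ + L / 2 * ‖xplus - xhat‖ ^ 2 :=
    descent_lemma f g L hL hdiff hlip xhat xplus
  -- identities
  have hsplit : ⟪g xhat, x - xhat⟫ = ⟪g xhat, a⟫ + ⟪g xhat, b⟫ := by
    rw [← inner_add_right]; congr 1; rw [ha, hb]; abel
  have hxxhat : ‖x - xhat‖ ^ 2 = ω ^ 2 * ‖x - x_prev‖ ^ 2 := by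
    have : x - xhat = (-ω) • (x - x_prev) := by rw [hxhat, neg_smul]; try abel
    rw [this, norm_smul, Real.norm_eq_abs, abs_neg, abs_of_nonneg hω, mul_pow]
  have hpyth : ‖x - xhat‖ ^ 2 = ‖a‖ ^ 2 + 2 * ⟪a, b⟫ + ‖b‖ ^ 2 := by
    have : x - xhat = a + b := by rw [ha, hb]; abel
    rw [this, norm_add_sq_real]; try ring
  have hrev : ‖xplus - x‖ ^ 2 = ‖b‖ ^ 2 := by rw [hb, norm_sub_rev]
  rw [ge_iff_le, hrev]
  rw [hsplit] at hconv1
  rw [hC] at hCpos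
  nlinarith [hconv1, hdesc, hCpos, hxxhat, hpyth]
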